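/- Let A, B be n-dimensional K-subspaces of L (n ≥ 1) and let φ : A → B be a K-linear isomorphism. Then φ is a strong matching from A to B if and only if for every nonzero a ∈ A and every K-subspace H ⊆ A with A = Ka ⊕ H, one has a⁻¹A ∩ B ⊆ φ(H). -/

import Mathlib

/-- The family `a : Fin n → L` is a basis of the `K`-subspace `A` of `L`. -/
def IsLinBasis (K : Type*) {L : Type*} [Field K] [DivisionRing L] [Algebra K L]
    {n : ℕ} (a : Fin n → L) (A : Submodule K L) : Prop :=
  LinearIndependent K a ∧ Submodule.span K (Set.range a) = A

/-- The basis `a` of `A` is matched to the basis `b` of `B`: for every `i` and every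
`x ∈ B`, if `a i * x ∈ A` then `x` lies in the span of `{b j : j ≠ i}`. -/
def MatchedBases (K : Type*) {L : Type*} [Field K] [DivisionRing L] [Algebra K L]
    {n : ℕ} (a b : Fin n → L) (A B : Submodule K L) : Prop :=
  ∀ i : Fin n, ∀ x ∈ B, a i * x ∈ A → x ∈ Submodule.span K (b '' {j | j ≠ i})

/-- A `K`-linear isomorphism `φ : A ≃ B` is a strong matching if every basis `𝒜` of `A`
is matched to the basis `φ(𝒜)` of `B`. -/
def IsStrongMatching {K L : Type*} [Field K] [DivisionRing L] [Algebra K L]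
    {A B : Submodule K L} (φ : A ≃ₗ[K] B) : Prop :=
  ∀ (n : ℕ) (a : Fin n → A), IsLinBasis K (fun i => (a i : L)) A →
    MatchedBases K (fun i => (a i : L)) (fun i => (φ (a i) : L)) A B

/-- A `K`-linear isomorphism `φ : A ≃ B` between `n`-dimensional subspaces of `L` is a
strong matching iff for every nonzero `a ∈ A` and every subspace `H ⊆ A` with
`A = Ka ⊕ H`, one has `a⁻¹A ∩ B ⊆ φ(H)`, where `a⁻¹A ∩ B = {x ∈ B : a·x ∈ A}`. -/
theorem isStrongMatching_iff {K L : Type*} [Field K] [DivisionRing L] [Algebra K L]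
    {n : ℕ} (hn : 1 ≤ n) (A B : Submodule K L)
    (hA : Module.finrank K A = n) (hB : Module.finrank K B = n) (φ : A ≃ₗ[K] B) :
    IsStrongMatching φ ↔
      ∀ a : L, a ∈ A → a ≠ 0 → ∀ H : Submodule K L, H ≤ A →
        Submodule.span K {a} ⊔ H = A → Submodule.span K {a} ⊓ H = ⊥ →
        B ⊓ A.comap (LinearMap.mulLeft K a) ≤
          Submodule.map B.subtype
            (Submodule.map (φ : A →ₗ[K] B) (H.comap A.subtype)) := by
  constructor
  · -- strong matching ⇒ condition
    intro hSM a haA ha0 H hHA hsup hinf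
    obtain ⟨m, rfl⟩ : ∃ m, n = m + 1 := ⟨n - 1, (Nat.succ_pred_eq_of_pos hn).symm⟩
    haveI : Module.Finite K A := Module.finite_of_finrank_pos (by rw [hA]; omega)
    set aA : A := ⟨a, haA⟩ with haAdef
    have haA0 : aA ≠ 0 := fun h => ha0 (congrArg Subtype.val h)
    set H' : Submodule K A := H.comap A.subtype with hH'def
    have hmapH' : Submodule.map A.subtype H' = H := by
      rw [hH'def, Submodule.map_comap_subtype, inf_eq_right.mpr hHA]
    have hinj : Function.Injective A.subtype := Subtype.val_injective
    have hspan_aA : Submodule.map A.subtype (Submodule.span K {aA}) = Submodule.span K {a} := by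
      rw [Submodule.map_span, Set.image_singleton]; rfl
    have hsup' : Submodule.span K {aA} ⊔ H' = ⊤ := by
      apply Submodule.map_injective_of_injective hinj
      rw [Submodule.map_sup, hspan_aA, hmapH', Submodule.map_top, Submodule.range_subtype, hsup]
    have hinf' : Submodule.span K {aA} ⊓ H' = ⊥ := by
      apply Submodule.map_injective_of_injective hinj
      rw [Submodule.map_inf _ hinj, hspan_aA, hmapH', Submodule.map_bot, hinf]
    have hcompl : IsCompl (Submodule.span K {aA}) H' :=
      ⟨disjoint_iff.mpr hinf', codisjoint_iff.mpr hsup'⟩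
    have hrankH' : Module.finrank K H' = m := by
      have := Submodule.finrank_add_eq_of_isCompl hcompl
      rw [finrank_span_singleton haA0, hA] at this
      omega
    haveI : Module.Free K H' := Module.Free.of_divisionRing K H'
    let bH : Module.Basis (Fin m) K H' := (Module.finBasis K H').reindex (finCongr hrankH')
    set v : Fin m → A := fun j => (bH j : A) with hvdef
    have hliv : LinearIndependent K v :=
      bH.linearIndependent.map_injOn H'.subtype H'.injective_subtype.injOn
    have hspanv : Submodule.span K (Set.range v) = H' := by
      have h1 : Set.range v = H'.subtype '' Set.range bH := by
        rw [← Set.range_comp]; rfl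
      rw [h1, ← Submodule.map_span, bH.span_eq, Submodule.map_top, Submodule.range_subtype]
    have haAnot : aA ∉ Submodule.span K (Set.range v) := by
      rw [hspanv]
      intro hmem
      have : a ∈ Submodule.span K {a} ⊓ H :=
        ⟨Submodule.mem_span_singleton_self a, hmem⟩
      rw [hinf] at this
      exact ha0 this
    set c : Fin (m + 1) → A := Fin.cons aA v with hcdef
    have hlic : LinearIndependent K c := hliv.fin_cons haAnot
    have hspanc : Submodule.span K (Set.range c) = ⊤ := by
      rw [hcdef, Fin.range_cons, Submodule.span_insert, hspanv, hsup']
    have hbasisL : IsLinBasis K (fun i => (c i : L)) A := by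
      constructor
      · exact hlic.map' A.subtype (Submodule.ker_subtype A)
      · have h1 : Set.range (fun i => ((c i : L))) = A.subtype '' Set.range c := by
          rw [← Set.range_comp]; rfl
        rw [h1, ← Submodule.map_span, hspanc, Submodule.map_top, Submodule.range_subtype]
    intro x hx
    obtain ⟨hxB, hax⟩ := hx
    have hax' : a * x ∈ A := hax
    have hx' := hSM (m + 1) c hbasisL 0 x hxB (by
      show (c 0 : L) * x ∈ A
      exact hax')
    -- identify the span with the image submodule
    have hset : {j : Fin (m + 1) | j ≠ 0} = Set.range Fin.succ := by
      ext j
      simp [Fin.exists_succ_eq, eq_comm]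
    have himg : (fun i => ((φ (c i) : L))) '' {j | j ≠ 0}
        = Set.range (fun k => ((φ (v k) : L))) := by
      rw [hset, ← Set.range_comp]
      rfl
    have hkey : Submodule.span K ((fun i => ((φ (c i) : L))) '' {j | j ≠ 0})
        = Submodule.map B.subtype (Submodule.map (φ : A →ₗ[K] B) H') := by
      rw [himg, ← hspanv, Submodule.map_span, Submodule.map_span, ← Set.range_comp,
        ← Set.range_comp]
      rfl
    rw [← hkey]
    exact hx'
  · -- condition ⇒ strong matching
    intro hcond n' aa hbasis i x hxB hmul
    obtain ⟨hli, hspan⟩ := hbasis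
    have ha0 : (aa i : L) ≠ 0 := hli.ne_zero i
    set vL : Fin n' → L := fun j => (aa j : L) with hvLdef
    set H : Submodule K L := Submodule.span K (vL '' {j | j ≠ i}) with hHdef
    have hHA : H ≤ A := by
      rw [hHdef, ← hspan]
      exact Submodule.span_mono (Set.image_subset_range _ _)
    have hsetu : ({i} : Set (Fin n')) ∪ {j | j ≠ i} = Set.univ := by
      ext j; by_cases h : j = i <;> simp [h]
    have hsup : Submodule.span K {(aa i : L)} ⊔ H = A := by
      rw [hHdef, ← Submodule.span_union, ← Set.image_singleton (f := vL) (a := i),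
        ← Set.image_union, hsetu, Set.image_univ, hspan]
    have hinf : Submodule.span K {(aa i : L)} ⊓ H = ⊥ := by
      have hd := hli.disjoint_span_image (s := {i}) (t := {j | j ≠ i})
        (by simp [Set.disjoint_left])
      rw [Set.image_singleton] at hd
      exact disjoint_iff.mp hd
    have hxmem : x ∈ B ⊓ A.comap (LinearMap.mulLeft K ((aa i : L))) := by
      refine ⟨hxB, ?_⟩
      simpa using hmul
    have hx := hcond (aa i : L) (aa i).2 ha0 H hHA hsup hinf hxmem
    have hcomap : H.comap A.subtype = Submodule.span K (aa '' {j | j ≠ i}) := by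
      have hmap : Submodule.map A.subtype (Submodule.span K (aa '' {j | j ≠ i})) = H := by
        rw [Submodule.map_span, Set.image_image, hHdef]
        rfl
      rw [← hmap, Submodule.comap_map_eq, Submodule.ker_subtype, sup_bot_eq]
    have hfin : Submodule.map B.subtype (Submodule.map (φ : A →ₗ[K] B) (H.comap A.subtype))
        = Submodule.span K ((fun j => ((φ (aa j) : L))) '' {j | j ≠ i}) := by
      rw [hcomap, Submodule.map_span, Submodule.map_span, Set.image_image, Set.image_image]
      rfl
    rw [hfin] at hx
    exact hx
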